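/- Let E(x) = exp(Σ_{i≥0} x^{p^i}/p^i) be the p-adic Artin–Hasse exponential and γ a root of log E(x) = 0 with ord_p(γ) = 1/(p−1). Write E(γx) = Σ_{m≥0} λ_m x^m. Then ord_p(λ_m) ≥ m/(p−1) for all m ≥ 0, and λ_m = γ^m/m! for 0 ≤ m ≤ p−1; in particular λ_0 = 1. -/

import Mathlib

open scoped Classical

namespace AHaux

open PowerSeries Finset

variable (p : ℕ) [hp : Fact p.Prime]

/-- The series `Σ_i x^(p^i - 1)`, i.e. the derivative of `Σ_i x^(p^i)/p^i`. -/
noncomputable def D : PowerSeries ℚ_[p] :=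
  PowerSeries.mk fun k => if ∃ i : ℕ, p ^ i = k + 1 then 1 else 0

lemma coeff_D (k : ℕ) :
    coeff k (D p) = if ∃ i : ℕ, p ^ i = k + 1 then 1 else 0 := coeff_mk _ _

lemma norm_coeff_D_le (k : ℕ) : ‖coeff k (D p)‖ ≤ 1 := by
  rw [coeff_D]; split_ifs <;> simp

/-- substitution of `x^p` into a power series. -/
noncomputable def Phi (F : PowerSeries ℚ_[p]) : PowerSeries ℚ_[p] :=
  PowerSeries.mk fun m => if p ∣ m then coeff (m / p) F else 0

lemma coeff_Phi (F : PowerSeries ℚ_[p]) (m : ℕ) :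
    coeff m (Phi p F) = if p ∣ m then coeff (m / p) F else 0 := coeff_mk _ _

lemma constantCoeff_Phi (F : PowerSeries ℚ_[p]) :
    constantCoeff (Phi p F) = constantCoeff F := by
  rw [← coeff_zero_eq_constantCoeff, coeff_Phi, if_pos (dvd_zero p), Nat.zero_div,
    coeff_zero_eq_constantCoeff]

lemma Phi_mul (F G : PowerSeries ℚ_[p]) : Phi p (F * G) = Phi p F * Phi p G := by
  have hp2 : 0 < p := hp.out.pos
  ext m
  rw [coeff_Phi, PowerSeries.coeff_mul m (Phi p F) (Phi p G)]
  simp only [coeff_Phi]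
  by_cases hm : p ∣ m
  · obtain ⟨k, rfl⟩ := hm
    rw [if_pos ⟨k, rfl⟩, Nat.mul_div_cancel_left _ hp2, coeff_mul]
    have hsub : ((antidiagonal k).image fun y : ℕ × ℕ => (p * y.1, p * y.2)) ⊆
        antidiagonal (p * k) := by
      intro x hx
      simp only [Finset.mem_image, HasAntidiagonal.mem_antidiagonal] at hx ⊢
      obtain ⟨y, hy, rfl⟩ := hx
      rw [← Nat.mul_add, hy]
    have hzero : ∀ x ∈ antidiagonal (p * k),
        x ∉ (antidiagonal k).image (fun y : ℕ × ℕ => (p * y.1, p * y.2)) →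
        (if p ∣ x.1 then coeff (x.1 / p) F else 0) *
          (if p ∣ x.2 then coeff (x.2 / p) G else 0) = 0 := by
      intro x hx hnx
      rw [HasAntidiagonal.mem_antidiagonal] at hx
      by_cases h1 : p ∣ x.1
      · by_cases h2 : p ∣ x.2
        · exfalso
          apply hnx
          simp only [Finset.mem_image, HasAntidiagonal.mem_antidiagonal]
          obtain ⟨a, ha⟩ := h1
          obtain ⟨b, hb⟩ := h2
          refine ⟨(a, b), Nat.eq_of_mul_eq_mul_left hp2 ?_, Prod.ext ha.symm hb.symm⟩
          rw [Nat.mul_add, ← ha, ← hb, hx]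
        · rw [if_neg h2, mul_zero]
      · rw [if_neg h1, zero_mul]
    have hinj : ∀ a ∈ antidiagonal k, ∀ b ∈ antidiagonal k,
        (fun y : ℕ × ℕ => (p * y.1, p * y.2)) a = (fun y : ℕ × ℕ => (p * y.1, p * y.2)) b →
        a = b := by
      intro a _ b _ hab
      have h1 : p * a.1 = p * b.1 := congrArg Prod.fst hab
      have h2 : p * a.2 = p * b.2 := congrArg Prod.snd hab
      exact Prod.ext (Nat.eq_of_mul_eq_mul_left hp2 h1) (Nat.eq_of_mul_eq_mul_left hp2 h2)
    rw [← Finset.sum_subset hsub hzero, Finset.sum_image hinj]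
    refine Finset.sum_congr rfl fun x hx => ?_
    rw [if_pos ⟨x.1, rfl⟩, if_pos ⟨x.2, rfl⟩, Nat.mul_div_cancel_left _ hp2,
      Nat.mul_div_cancel_left _ hp2]
  · rw [if_neg hm]
    refine (Finset.sum_eq_zero fun x hx => ?_).symm
    rw [HasAntidiagonal.mem_antidiagonal] at hx
    by_cases h1 : p ∣ x.1
    · have h2 : ¬ p ∣ x.2 := fun h2 => hm (hx ▸ Nat.dvd_add h1 h2)
      rw [if_neg h2, mul_zero]
    · rw [if_neg h1, zero_mul]


lemma coeff_X_pow_mul_Phi (G : PowerSeries ℚ_[p]) (k : ℕ) :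
    coeff k (X ^ (p - 1) * Phi p G) =
      if p ∣ (k + 1) then coeff ((k + 1) / p - 1) G else 0 := by
  have hp2 : 2 ≤ p := hp.out.two_le
  by_cases hd : p ∣ (k + 1)
  · obtain ⟨t, ht⟩ := hd
    have ht1 : 1 ≤ t := by nlinarith
    have hmm : p * (t - 1) + p = p * t := by
      rw [← Nat.mul_succ]; congr 1; omega
    have hm : k = p * (t - 1) + (p - 1) := by omega
    have hdiv : (k + 1) / p = t := by rw [ht]; exact Nat.mul_div_cancel_left t (by omega)
    rw [if_pos (show p ∣ k + 1 from ⟨t, ht⟩), hdiv, hm, coeff_X_pow_mul, coeff_Phi,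
      if_pos ⟨t - 1, rfl⟩, Nat.mul_div_cancel_left _ (show 0 < p by omega)]
  · rw [if_neg hd, PowerSeries.coeff_X_pow_mul']
    by_cases hm : p - 1 ≤ k
    · rw [if_pos hm, coeff_Phi, if_neg]
      intro hdd
      apply hd
      have : k - (p - 1) + p = k + 1 := by omega
      exact this ▸ Nat.dvd_add hdd dvd_rfl
    · rw [if_neg hm]

lemma derivative_Phi (F : PowerSeries ℚ_[p]) :
    d⁄dX ℚ_[p] (Phi p F) = C (p : ℚ_[p]) * (X ^ (p - 1) * Phi p (d⁄dX ℚ_[p] F)) := by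
  have hp2 : 2 ≤ p := hp.out.two_le
  ext m
  rw [coeff_derivative, coeff_Phi, coeff_C_mul, coeff_X_pow_mul_Phi]
  by_cases hd : p ∣ (m + 1)
  · obtain ⟨t, ht⟩ := hd
    have ht1 : 1 ≤ t := by nlinarith
    have hdiv : (m + 1) / p = t := by rw [ht]; exact Nat.mul_div_cancel_left t (by omega)
    rw [if_pos (show p ∣ m + 1 from ⟨t, ht⟩), if_pos (show p ∣ m + 1 from ⟨t, ht⟩), hdiv,
      coeff_derivative]
    have h2 : t - 1 + 1 = t := by omega
    rw [h2]
    have h3 : ((t - 1 : ℕ) : ℚ_[p]) + 1 = (t : ℚ_[p]) := by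
      exact_mod_cast congrArg (Nat.cast : ℕ → ℚ_[p]) h2
    rw [h3]
    have hcast : ((m : ℚ_[p]) + 1) = (p : ℚ_[p]) * (t : ℚ_[p]) := by
      have h4 : ((m + 1 : ℕ) : ℚ_[p]) = ((p * t : ℕ) : ℚ_[p]) := by rw [ht]
      push_cast at h4
      push_cast
      exact h4
    rw [hcast]
    ring
  · rw [if_neg hd, if_neg hd, zero_mul, mul_zero]

lemma D_eq : D p = 1 + X ^ (p - 1) * Phi p (D p) := by
  have hp2 : 2 ≤ p := hp.out.two_le
  ext k
  rw [map_add, coeff_D, coeff_one, coeff_X_pow_mul_Phi]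
  by_cases hd : p ∣ (k + 1)
  · obtain ⟨t, ht⟩ := hd
    have ht1 : 1 ≤ t := by nlinarith
    have hk0 : k ≠ 0 := by
      intro h; rw [h] at ht; nlinarith
    have hdiv : (k + 1) / p = t := by rw [ht]; exact Nat.mul_div_cancel_left t (by omega)
    rw [if_pos (show p ∣ k + 1 from ⟨t, ht⟩), hdiv, if_neg hk0, coeff_D, zero_add]
    have h2 : t - 1 + 1 = t := by omega
    rw [h2]
    by_cases he : ∃ i : ℕ, p ^ i = t
    · obtain ⟨i, rfl⟩ := he
      rw [if_pos (show ∃ j : ℕ, p ^ j = p ^ i from ⟨i, rfl⟩),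
        if_pos (show ∃ j : ℕ, p ^ j = k + 1 from ⟨i + 1, by rw [pow_succ', ht]⟩)]
    · rw [if_neg he, if_neg]
      rintro ⟨i, hi⟩
      rcases Nat.eq_zero_or_pos i with rfl | hi1
      · rw [pow_zero] at hi; omega
      · refine he ⟨i - 1, Nat.eq_of_mul_eq_mul_left (show 0 < p by omega) ?_⟩
        rw [← ht, ← hi, ← pow_succ', show i - 1 + 1 = i from by omega]
  · rw [if_neg hd, add_zero]
    by_cases hk0 : k = 0
    · subst hk0
      rw [if_pos rfl, if_pos ⟨0, pow_zero p⟩]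
    · rw [if_neg hk0, if_neg]
      rintro ⟨i, hi⟩
      rcases Nat.eq_zero_or_pos i with rfl | hi1
      · rw [pow_zero] at hi; omega
      · exact hd ⟨p ^ (i - 1), by rw [← hi, ← pow_succ', show i - 1 + 1 = i from by omega]⟩

/-- `exp (p x)`. -/
noncomputable def Ep : PowerSeries ℚ_[p] := rescale (p : ℚ_[p]) (exp ℚ_[p])

lemma coeff_Ep (m : ℕ) :
    coeff m (Ep p) = (p : ℚ_[p]) ^ m * algebraMap ℚ ℚ_[p] (1 / m.factorial) := by
  rw [Ep, coeff_rescale, coeff_exp]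

lemma constantCoeff_Ep : constantCoeff (Ep p) = 1 := by
  rw [← coeff_zero_eq_constantCoeff, coeff_Ep]
  simp

lemma derivative_Ep : d⁄dX ℚ_[p] (Ep p) = C (p : ℚ_[p]) * Ep p := by
  ext m
  rw [coeff_derivative, coeff_Ep, coeff_C_mul, coeff_Ep]
  have h1 : algebraMap ℚ ℚ_[p] (1 / (m + 1).factorial) * ((m : ℚ_[p]) + 1) =
      algebraMap ℚ ℚ_[p] (1 / m.factorial) := by
    have h2 : ((m : ℚ_[p]) + 1) = algebraMap ℚ ℚ_[p] ((m : ℚ) + 1) := by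
      simp
    rw [h2, ← map_mul]
    congr 1
    rw [Nat.factorial_succ]
    have h3 : ((m.factorial : ℚ)) ≠ 0 := by positivity
    push_cast
    field_simp
    try ring
  rw [mul_assoc, h1, pow_succ]
  try ring

lemma ode_unique (H F G : PowerSeries ℚ_[p])
    (h0 : constantCoeff F = constantCoeff G)
    (hF : d⁄dX ℚ_[p] F = H * F) (hG : d⁄dX ℚ_[p] G = H * G) : F = G := by
  ext m
  induction m using Nat.strong_induction_on with
  | _ m ih =>
    match m with
    | 0 => simpa using h0
    | (n + 1) =>
      have hFn : coeff (n + 1) F * (n + 1) = coeff (n + 1) G * (n + 1) := by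
        rw [← coeff_derivative, ← coeff_derivative, hF, hG, coeff_mul, coeff_mul]
        refine Finset.sum_congr rfl fun x hx => ?_
        rw [HasAntidiagonal.mem_antidiagonal] at hx
        rw [ih x.2 (by omega)]
      have hne : ((n : ℚ_[p]) + 1) ≠ 0 := by
        exact_mod_cast Nat.cast_add_one_ne_zero (R := ℚ_[p]) n
      exact mul_right_cancel₀ hne hFn

lemma dwork_identity (F : PowerSeries ℚ_[p]) (h0 : constantCoeff F = 1)
    (hF : d⁄dX ℚ_[p] F = D p * F) : F ^ p = Phi p F * Ep p := by
  have hp1 : 1 ≤ p := hp.out.one_le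
  apply ode_unique p (C (p : ℚ_[p]) * D p)
  · rw [map_pow, h0, one_pow, map_mul, constantCoeff_Phi, h0, constantCoeff_Ep, mul_one]
  · rw [Derivation.leibniz_pow, hF, nsmul_eq_mul]
    have hC : (p : PowerSeries ℚ_[p]) = C (p : ℚ_[p]) := by
      rw [map_natCast]
    rw [hC, smul_eq_mul]
    rw [show F ^ p = F ^ (p - 1) * F from by rw [← pow_succ]; congr 1; omega]
    ring
  · rw [Derivation.leibniz, smul_eq_mul, smul_eq_mul, derivative_Ep, derivative_Phi, hF,
      Phi_mul]
    nth_rewrite 2 [D_eq]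
    ring


lemma norm_natCast_eq_one_of_not_dvd (m : ℕ) (h : ¬ p ∣ m) : ‖(m : ℚ_[p])‖ = 1 := by
  refine le_antisymm (by exact_mod_cast Padic.norm_int_le_one (p := p) (m : ℤ)) ?_
  by_contra hlt
  push_neg at hlt
  have h2 := (Padic.norm_intCast_lt_one_iff (p := p) (k := (m : ℤ))).mp (by exact_mod_cast hlt)
  exact h (by exact_mod_cast h2)

lemma padicValNat_factorial_le (b : ℕ) (hb : b ≠ 0) :
    padicValNat p (b.factorial) ≤ b - 1 := by
  have hp2 : 2 ≤ p := hp.out.two_le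
  have h := sub_one_mul_padicValNat_factorial (p := p) b
  have hnil : p.digits b ≠ [] := Nat.digits_ne_nil_iff_ne_zero.mpr hb
  have hlast := Nat.getLast_digit_ne_zero p hb
  have hs : 1 ≤ (p.digits b).sum := by
    calc 1 ≤ (p.digits b).getLast hnil := Nat.one_le_iff_ne_zero.mpr hlast
    _ ≤ (p.digits b).sum :=
      List.single_le_sum (fun x _ => Nat.zero_le x) _ (List.getLast_mem hnil)
  have hle : padicValNat p (b.factorial) ≤ (p - 1) * padicValNat p (b.factorial) :=
    Nat.le_mul_of_pos_left _ (by omega)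
  omega

lemma norm_coeff_Ep_le (m : ℕ) (hm : m ≠ 0) : ‖coeff m (Ep p)‖ ≤ (p : ℝ)⁻¹ := by
  have hp2 : 2 ≤ p := hp.out.two_le
  have hpR : (1 : ℝ) ≤ (p : ℝ) := by exact_mod_cast (by omega : 1 ≤ p)
  rw [coeff_Ep, eq_ratCast (algebraMap ℚ ℚ_[p]) _]
  have hcast : (((1 : ℚ) / m.factorial : ℚ) : ℚ_[p]) = ((m.factorial : ℚ_[p]))⁻¹ := by
    push_cast
    rw [one_div]
  rw [hcast, norm_mul, norm_pow, norm_inv, Padic.norm_p,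
    Padic.norm_eq_zpow_neg_valuation (by exact_mod_cast m.factorial_ne_zero), Padic.valuation_natCast]
  have h1 : ((p : ℝ)⁻¹) ^ m * ((p : ℝ) ^ (-(padicValNat p m.factorial : ℤ)))⁻¹
      = (p : ℝ) ^ ((padicValNat p m.factorial : ℤ) - m) := by
    rw [← zpow_natCast ((p : ℝ)⁻¹) m, ← zpow_neg_one, ← zpow_mul, ← zpow_neg,
      ← zpow_add₀ (show (p:ℝ) ≠ 0 by positivity)]
    congr 1
    ring
  rw [h1]
  calc (p : ℝ) ^ ((padicValNat p m.factorial : ℤ) - m) ≤ (p : ℝ) ^ (-1 : ℤ) := by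
        apply zpow_le_zpow_right₀ hpR
        have := padicValNat_factorial_le p m hm
        omega
    _ = (p : ℝ)⁻¹ := by simp


lemma poly_pow_congr (A : Polynomial ℚ_[p]) (hA : ∀ n, ‖A.coeff n‖ ≤ 1) (k : ℕ) :
    ‖(A ^ p).coeff k - (Polynomial.expand ℚ_[p] p A).coeff k‖ ≤ (p : ℝ)⁻¹ := by
  classical
  set B : Polynomial ℤ_[p] :=
    ∑ n ∈ A.support, Polynomial.C (R := ℤ_[p]) ⟨A.coeff n, hA n⟩ * Polynomial.X ^ n with hB
  have hmap : B.map (PadicInt.Coe.ringHom (p := p)) = A := by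
    rw [hB, Polynomial.map_sum]
    have : ∀ n ∈ A.support,
        Polynomial.map (PadicInt.Coe.ringHom (p := p))
            (Polynomial.C (R := ℤ_[p]) ⟨A.coeff n, hA n⟩ * Polynomial.X ^ n) =
          Polynomial.monomial n (A.coeff n) := by
      intro n _
      rw [Polynomial.map_mul, Polynomial.map_pow, Polynomial.map_X,
        ← Polynomial.C_mul_X_pow_eq_monomial]
      exact congrArg (· * Polynomial.X ^ n) (Polynomial.map_C _)
    rw [Finset.sum_congr rfl this, ← Polynomial.as_sum_support A]
  have hzmod : (B ^ p - Polynomial.expand ℤ_[p] p B).map (PadicInt.toZMod (p := p)) = 0 := by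
    rw [Polynomial.map_sub, Polynomial.map_pow, Polynomial.map_expand]
    have h := Polynomial.map_frobenius_expand (p := p) (B.map (PadicInt.toZMod (p := p)))
    rw [ZMod.frobenius_zmod, Polynomial.map_id] at h
    rw [h, sub_self]
  have key : ∀ j, ‖(B ^ p - Polynomial.expand ℤ_[p] p B).coeff j‖ ≤ (p : ℝ)⁻¹ := by
    intro j
    have hx : PadicInt.toZMod ((B ^ p - Polynomial.expand ℤ_[p] p B).coeff j) = 0 := by
      rw [← Polynomial.coeff_map, hzmod, Polynomial.coeff_zero]
    have hdvd : (p : ℤ_[p]) ∣ (B ^ p - Polynomial.expand ℤ_[p] p B).coeff j := by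
      have hker : (B ^ p - Polynomial.expand ℤ_[p] p B).coeff j ∈
          RingHom.ker (PadicInt.toZMod (p := p)) := hx
      rw [PadicInt.ker_toZMod, PadicInt.maximalIdeal_eq_span_p,
        Ideal.mem_span_singleton] at hker
      exact hker
    obtain ⟨y, hy⟩ := hdvd
    rw [hy, norm_mul, PadicInt.norm_p]
    calc ((p : ℝ))⁻¹ * ‖y‖ ≤ (p : ℝ)⁻¹ * 1 := by
          gcongr
          exact y.norm_le_one
      _ = (p : ℝ)⁻¹ := mul_one _
  have heq : A ^ p - Polynomial.expand ℚ_[p] p A =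
      (B ^ p - Polynomial.expand ℤ_[p] p B).map (PadicInt.Coe.ringHom (p := p)) := by
    rw [Polynomial.map_sub, Polynomial.map_pow, Polynomial.map_expand, hmap]
  have hcoe : ∀ x : ℤ_[p], PadicInt.Coe.ringHom (p := p) x = (x : ℚ_[p]) := fun _ => rfl
  have h5 : (A ^ p).coeff k - (Polynomial.expand ℚ_[p] p A).coeff k =
      PadicInt.Coe.ringHom (p := p) ((B ^ p - Polynomial.expand ℤ_[p] p B).coeff k) := by
    rw [← Polynomial.coeff_map, ← heq, Polynomial.coeff_sub]
  rw [h5, hcoe, ← PadicInt.norm_def]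
  exact key k


lemma coeff_double_mul_eq_zero (B W : PowerSeries ℚ_[p]) (m : ℕ) (hm : 1 ≤ m)
    (hB : ∀ j, j < m → coeff j B = 0) : coeff m (B * B * W) = 0 := by
  rw [coeff_mul]
  refine Finset.sum_eq_zero fun x hx => ?_
  rw [HasAntidiagonal.mem_antidiagonal] at hx
  have hBB : coeff x.1 (B * B) = 0 := by
    rw [coeff_mul]
    refine Finset.sum_eq_zero fun y hy => ?_
    rw [HasAntidiagonal.mem_antidiagonal] at hy
    by_cases hc : y.1 < m
    · rw [hB y.1 hc, zero_mul]
    · have : y.2 < m := by omega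
      rw [hB y.2 this, mul_zero]
  rw [hBB, zero_mul]

theorem integral (F : PowerSeries ℚ_[p]) (h0 : constantCoeff F = 1)
    (hF : d⁄dX ℚ_[p] F = D p * F) (m : ℕ) : ‖coeff m F‖ ≤ 1 := by
  have hp2 : 2 ≤ p := hp.out.two_le
  have hpinv_pos : (0 : ℝ) < (p : ℝ)⁻¹ := by positivity
  have hpinv_le : (p : ℝ)⁻¹ ≤ 1 := by
    rw [inv_le_one_iff₀]
    right
    exact_mod_cast (by omega : 1 ≤ p)
  induction m using Nat.strong_induction_on with
  | _ m ih =>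
  rcases Nat.eq_zero_or_pos m with rfl | hm
  · rw [coeff_zero_eq_constantCoeff_apply, h0, norm_one]
  by_cases hdvd : p ∣ m
  · -- hard case : p ∣ m
    obtain ⟨k, hk⟩ := hdvd
    have hk1 : 1 ≤ k := by nlinarith
    have hklt : k < m := by nlinarith
    set A := trunc m F with hA
    have hAco : ∀ n, A.coeff n = if n < m then coeff n F else 0 := fun n =>
      coeff_trunc n m F
    have hAnorm : ∀ n, ‖A.coeff n‖ ≤ 1 := by
      intro n
      rw [hAco]
      split_ifs with h
      · exact ih n h
      · rw [norm_zero]; exact zero_le_one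
    set B := F - (A : PowerSeries ℚ_[p]) with hBdef
    have hBlow : ∀ j, j < m → coeff j B = 0 := by
      intro j hj
      rw [hBdef, map_sub, Polynomial.coeff_coe, hAco, if_pos hj, sub_self]
    have hBm : coeff m B = coeff m F := by
      rw [hBdef, map_sub, Polynomial.coeff_coe, hAco, if_neg (lt_irrefl m), sub_zero]
    have hFAB : F = (A : PowerSeries ℚ_[p]) + B := by rw [hBdef]; ring
    -- Step 1 : coeff m (F ^ p) = coeff m (A ^ p) + p * coeff m F
    have step1 : coeff m (F ^ p) =
        coeff m ((A : PowerSeries ℚ_[p]) ^ p) + p * coeff m F := by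
      have hexp : F ^ p = ∑ i ∈ Finset.range (p + 1),
          (A : PowerSeries ℚ_[p]) ^ i * B ^ (p - i) * (p.choose i : PowerSeries ℚ_[p]) := by
        rw [hFAB, add_pow]
      rw [hexp, map_sum]
      have hzero : ∀ i ∈ Finset.range (p + 1), i ∉ ({p - 1, p} : Finset ℕ) →
          coeff m ((A : PowerSeries ℚ_[p]) ^ i * B ^ (p - i) *
            (p.choose i : PowerSeries ℚ_[p])) = 0 := by
        intro i hi hni
        simp only [Finset.mem_insert, Finset.mem_singleton] at hni
        push_neg at hni
        rw [Finset.mem_range] at hi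
        have h2i : 2 ≤ p - i := by omega
        obtain ⟨d, hd⟩ : ∃ d, p - i = 2 + d := ⟨p - i - 2, by omega⟩
        have hrw : (A : PowerSeries ℚ_[p]) ^ i * B ^ (p - i) *
            (p.choose i : PowerSeries ℚ_[p]) = B * B *
            (B ^ d * (A : PowerSeries ℚ_[p]) ^ i *
              (p.choose i : PowerSeries ℚ_[p])) := by
          rw [hd, pow_add, pow_two]
          ring
        rw [hrw]
        exact coeff_double_mul_eq_zero p B _ m hm hBlow
      have hsub : ({p - 1, p} : Finset ℕ) ⊆ Finset.range (p + 1) := by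
        intro i hi
        simp only [Finset.mem_insert, Finset.mem_singleton] at hi
        rw [Finset.mem_range]
        omega
      rw [← Finset.sum_subset hsub (fun i hi hni => hzero i hi hni),
        Finset.sum_pair (show p - 1 ≠ p from by omega)]
      -- the i = p term
      have hterm_p : coeff m ((A : PowerSeries ℚ_[p]) ^ p * B ^ (p - p) *
          (p.choose p : PowerSeries ℚ_[p])) = coeff m ((A : PowerSeries ℚ_[p]) ^ p) := by
        rw [Nat.sub_self, pow_zero, Nat.choose_self]
        norm_num
      -- the i = p - 1 term
      have hterm_p1 : coeff m ((A : PowerSeries ℚ_[p]) ^ (p - 1) * B ^ (p - (p - 1)) *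
          (p.choose (p - 1) : PowerSeries ℚ_[p])) = p * coeff m F := by
        have hch : p.choose (p - 1) = p := by
          rw [← Nat.choose_symm (show p - 1 ≤ p from by omega),
            show p - (p - 1) = 1 from by omega, Nat.choose_one_right]
        have hpp : p - (p - 1) = 1 := by omega
        rw [hch, hpp, pow_one]
        have hCp : (p : PowerSeries ℚ_[p]) = C (p : ℚ_[p]) := by rw [map_natCast]
        rw [hCp, show (A : PowerSeries ℚ_[p]) ^ (p - 1) * B * C (p : ℚ_[p]) =
          C (p : ℚ_[p]) * ((A : PowerSeries ℚ_[p]) ^ (p - 1) * B) from by ring,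
          coeff_C_mul]
        congr 1
        rw [coeff_mul]
        rw [Finset.sum_eq_single_of_mem ((0 : ℕ), m) (by rw [HasAntidiagonal.mem_antidiagonal]; simp)]
        · rw [coeff_zero_eq_constantCoeff_apply, map_pow, Polynomial.constantCoeff_coe,
            hAco, if_pos hm, coeff_zero_eq_constantCoeff_apply, h0, one_pow, one_mul, hBm]
        · intro x hx hxne
          rw [HasAntidiagonal.mem_antidiagonal] at hx
          by_cases hx2 : x.2 = m
          · exfalso
            apply hxne
            have : x.1 = 0 := by omega
            rw [Prod.ext_iff]
            exact ⟨this, hx2⟩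
          · rw [hBlow x.2 (by omega), mul_zero]
      rw [hterm_p, hterm_p1]
      ring
    -- Step 2 : ‖coeff m (A ^ p) - coeff k F‖ ≤ p⁻¹
    have step2 : ‖coeff m ((A : PowerSeries ℚ_[p]) ^ p) - coeff k F‖ ≤
        (p : ℝ)⁻¹ := by
      have h1 : coeff m ((A : PowerSeries ℚ_[p]) ^ p) = (A ^ p).coeff m := by
        rw [← Polynomial.coe_pow, Polynomial.coeff_coe]
      have h2 : (Polynomial.expand ℚ_[p] p A).coeff m = coeff k F := by
        rw [Polynomial.coeff_expand (show 0 < p from by omega), if_pos ⟨k, hk⟩, hk,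
          Nat.mul_div_cancel_left _ (show 0 < p from by omega), hAco, if_pos hklt]
      rw [h1, ← h2]
      exact poly_pow_congr p A hAnorm m
    -- Step 3 : ‖coeff m (Phi F * Ep) - coeff k F‖ ≤ p⁻¹
    have step3 : ‖coeff m (Phi p F * Ep p) - coeff k F‖ ≤ (p : ℝ)⁻¹ := by
      have hmem : ((m : ℕ), (0 : ℕ)) ∈ antidiagonal m := by rw [HasAntidiagonal.mem_antidiagonal]; simp
      have hsplit : coeff m (Phi p F * Ep p) =
          coeff m (Phi p F) * coeff 0 (Ep p) +
          ∑ x ∈ (antidiagonal m).erase ((m : ℕ), (0 : ℕ)),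
            coeff x.1 (Phi p F) * coeff x.2 (Ep p) := by
        rw [coeff_mul, ← Finset.add_sum_erase _ _ hmem]
      have hterm : coeff m (Phi p F) * coeff 0 (Ep p) = coeff k F := by
        rw [coeff_Phi, if_pos ⟨k, hk⟩, hk, Nat.mul_div_cancel_left _ (show 0 < p from by omega),
          coeff_Ep]
        simp
      rw [hsplit, hterm, add_sub_cancel_left]
      apply IsUltrametricDist.norm_sum_le_of_forall_le_of_nonneg (le_of_lt hpinv_pos)
      intro x hx
      rw [Finset.mem_erase, HasAntidiagonal.mem_antidiagonal] at hx
      obtain ⟨hxne, hxsum⟩ := hx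
      have hx2 : x.2 ≠ 0 := by
        intro h
        apply hxne
        rw [Prod.ext_iff]
        exact ⟨by omega, h⟩
      have hPhi : ‖coeff x.1 (Phi p F)‖ ≤ 1 := by
        rw [coeff_Phi]
        split_ifs with h
        · refine ih (x.1 / p) ?_
          have hle : x.1 / p ≤ x.1 := Nat.div_le_self _ _
          omega
        · rw [norm_zero]; exact zero_le_one
      calc ‖coeff x.1 (Phi p F) * coeff x.2 (Ep p)‖
          = ‖coeff x.1 (Phi p F)‖ * ‖coeff x.2 (Ep p)‖ := norm_mul _ _
        _ ≤ 1 * (p : ℝ)⁻¹ := by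
            gcongr
            exact norm_coeff_Ep_le p x.2 hx2
        _ = (p : ℝ)⁻¹ := one_mul _
    -- combine
    have hdw : coeff m (F ^ p) = coeff m (Phi p F * Ep p) := by
      rw [dwork_identity p F h0 hF]
    have hkey : (p : ℚ_[p]) * coeff m F =
        (coeff m (Phi p F * Ep p) - coeff k F) -
        (coeff m ((A : PowerSeries ℚ_[p]) ^ p) - coeff k F) := by
      rw [← hdw, step1]
      ring
    have hnorm : ‖(p : ℚ_[p]) * coeff m F‖ ≤ (p : ℝ)⁻¹ := by
      rw [hkey, sub_eq_add_neg]
      refine (IsUltrametricDist.norm_add_le_max _ _).trans (max_le step3 ?_)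
      rw [norm_neg]
      exact step2
    rw [norm_mul, Padic.norm_p] at hnorm
    calc ‖coeff m F‖ = (p : ℝ) * ((p : ℝ)⁻¹ * ‖coeff m F‖) := by
          field_simp
      _ ≤ (p : ℝ) * (p : ℝ)⁻¹ := by
          apply mul_le_mul_of_nonneg_left hnorm (by positivity)
      _ = 1 := by field_simp
  · -- easy case : p ∤ m
    obtain ⟨n, rfl⟩ : ∃ n, m = n + 1 := ⟨m - 1, by omega⟩
    have h1 : coeff (n + 1) F * ((n : ℚ_[p]) + 1) =
        ∑ x ∈ antidiagonal n, coeff x.1 (D p) * coeff x.2 F := by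
      rw [← coeff_derivative, hF, coeff_mul]
    have h2 : ‖coeff (n + 1) F * ((n : ℚ_[p]) + 1)‖ ≤ 1 := by
      rw [h1]
      apply IsUltrametricDist.norm_sum_le_of_forall_le_of_nonneg zero_le_one
      intro x hx
      rw [HasAntidiagonal.mem_antidiagonal] at hx
      calc ‖coeff x.1 (D p) * coeff x.2 F‖
          = ‖coeff x.1 (D p)‖ * ‖coeff x.2 F‖ := norm_mul _ _
        _ ≤ 1 * 1 := by
            gcongr
            · exact norm_coeff_D_le p x.1
            · exact ih x.2 (by omega)
        _ = 1 := one_mul _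
    have h3 : ‖((n : ℚ_[p]) + 1)‖ = 1 := by
      have : ((n : ℚ_[p]) + 1) = (((n + 1 : ℕ) : ℚ_[p])) := by push_cast; ring
      rw [this]
      exact norm_natCast_eq_one_of_not_dvd p (n + 1) hdvd
    rwa [norm_mul, h3, mul_one] at h2

lemma derivative_map' (f : PowerSeries ℚ) :
    d⁄dX ℚ_[p] (PowerSeries.map (Rat.castHom ℚ_[p]) f) =
      PowerSeries.map (Rat.castHom ℚ_[p]) (d⁄dX ℚ f) := by
  ext m
  rw [coeff_derivative, coeff_map, coeff_map, coeff_derivative, map_mul]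
  congr 1

end AHaux

theorem artin_hasse_coefficients' (p : ℕ) [hp : Fact p.Prime]
    (K : Type*) [NontriviallyNormedField K]
    (hK : ∀ q : ℚ, ‖(q : K)‖ = ‖(q : ℚ_[p])‖)
    (L : PowerSeries ℚ)
    (hL : ∀ m : ℕ, PowerSeries.coeff m L =
      if h : ∃ i : ℕ, p ^ i = m then (1 : ℚ) / (p ^ Nat.find h) else 0)
    (E : PowerSeries ℚ)
    (hE0 : PowerSeries.constantCoeff E = 1)
    (hE : PowerSeries.derivative ℚ E = PowerSeries.derivative ℚ L * E)
    (γ : K)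
    (hγord : ‖γ‖ = (p : ℝ) ^ (-(1 : ℝ) / ((p : ℝ) - 1)))
    (lam : ℕ → K)
    (hlam : ∀ m : ℕ, lam m = ((PowerSeries.coeff m E : ℚ) : K) * γ ^ m) :
    (∀ m : ℕ, ‖lam m‖ ≤ (p : ℝ) ^ (-(m : ℝ) / ((p : ℝ) - 1))) ∧
    (∀ m : ℕ, m ≤ p - 1 → lam m = γ ^ m / (m.factorial : K)) ∧
    lam 0 = 1 := by
  have hp2 : 2 ≤ p := hp.out.two_le
  have hnat : ∀ n : ℕ, (n : K) = 0 → n = 0 := by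
    intro n hn
    by_contra h
    have h1 : ((n : ℚ) : K) = 0 := by rw [Rat.cast_natCast]; exact hn
    have h2 := hK (n : ℚ)
    rw [h1, norm_zero] at h2
    have h3 : ((n : ℚ) : ℚ_[p]) ≠ 0 := by
      exact_mod_cast (Nat.cast_ne_zero (R := ℚ_[p])).mpr h
    exact h3 (norm_eq_zero.mp h2.symm)
  have hKchar : CharZero K := by
    refine ⟨fun a b hab => ?_⟩
    rcases le_total a b with h | h
    · have hz : ((b - a : ℕ) : K) = 0 := by
        rw [Nat.cast_sub h, hab, sub_self]
      have := hnat _ hz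
      omega
    · have hz : ((a - b : ℕ) : K) = 0 := by
        rw [Nat.cast_sub h, hab, sub_self]
      have := hnat _ hz
      omega
  -- the coefficients of L'
  have hL' : ∀ k : ℕ, PowerSeries.coeff k (PowerSeries.derivative ℚ L) =
      if ∃ i : ℕ, p ^ i = k + 1 then 1 else 0 := by
    intro k
    rw [PowerSeries.coeff_derivative, hL (k + 1)]
    by_cases h : ∃ i : ℕ, p ^ i = k + 1
    · rw [dif_pos h, if_pos h]
      have hs := Nat.find_spec h
      have h2 : ((p : ℚ)) ^ (Nat.find h) = ((k : ℚ) + 1) := by exact_mod_cast hs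
      rw [h2]
      have h3 : ((k : ℚ) + 1) ≠ 0 := by positivity
      field_simp
    · rw [dif_neg h, if_neg h, zero_mul]
  -- constant coefficient of E
  have hc0 : PowerSeries.coeff 0 E = 1 := by
    rw [PowerSeries.coeff_zero_eq_constantCoeff_apply, hE0]
  -- the mapped series over ℚ_[p]
  have hDmap : PowerSeries.map (Rat.castHom ℚ_[p]) (PowerSeries.derivative ℚ L) =
      AHaux.D p := by
    ext k
    rw [PowerSeries.coeff_map, hL', AHaux.coeff_D, apply_ite (Rat.castHom ℚ_[p]), map_one,
      map_zero]
  have hF0 : PowerSeries.constantCoeff (PowerSeries.map (Rat.castHom ℚ_[p]) E) = 1 := by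
    rw [← PowerSeries.coeff_zero_eq_constantCoeff_apply, PowerSeries.coeff_map, hc0, map_one]
  have hFD : PowerSeries.derivative ℚ_[p] (PowerSeries.map (Rat.castHom ℚ_[p]) E) =
      AHaux.D p * (PowerSeries.map (Rat.castHom ℚ_[p]) E) := by
    rw [AHaux.derivative_map', hE, map_mul, hDmap]
  have hint : ∀ m : ℕ, ‖((PowerSeries.coeff m E : ℚ) : ℚ_[p])‖ ≤ 1 := by
    intro m
    have h := AHaux.integral p (PowerSeries.map (Rat.castHom ℚ_[p]) E) hF0 hFD m
    rwa [PowerSeries.coeff_map] at h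
  -- norm of powers of γ
  have hγpow : ∀ m : ℕ, ‖γ ^ m‖ = (p : ℝ) ^ (-(m : ℝ) / ((p : ℝ) - 1)) := by
    intro m
    rw [norm_pow, hγord, ← Real.rpow_natCast ((p : ℝ) ^ (-(1 : ℝ) / ((p : ℝ) - 1))) m,
      ← Real.rpow_mul (by positivity)]
    congr 1
    ring
  -- the three statements
  refine ⟨?_, ?_, ?_⟩
  · intro m
    rw [hlam m, norm_mul, hK, hγpow m]
    calc ‖((PowerSeries.coeff m E : ℚ) : ℚ_[p])‖ * (p : ℝ) ^ (-(m : ℝ) / ((p : ℝ) - 1))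
        ≤ 1 * (p : ℝ) ^ (-(m : ℝ) / ((p : ℝ) - 1)) :=
          mul_le_mul_of_nonneg_right (hint m) (Real.rpow_nonneg (Nat.cast_nonneg p) _)
      _ = (p : ℝ) ^ (-(m : ℝ) / ((p : ℝ) - 1)) := one_mul _
  · -- the factorial formula for small m
    have hrec : ∀ n : ℕ, PowerSeries.coeff (n + 1) E * ((n : ℚ) + 1) =
        ∑ x ∈ Finset.HasAntidiagonal.antidiagonal n,
          PowerSeries.coeff x.1 (PowerSeries.derivative ℚ L) * PowerSeries.coeff x.2 E := by
      intro n
      rw [← PowerSeries.coeff_derivative, hE, PowerSeries.coeff_mul]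
    have hfact : ∀ m : ℕ, m ≤ p - 1 → PowerSeries.coeff m E = 1 / m.factorial := by
      intro m
      induction m with
      | zero => intro _; rw [hc0]; simp
      | succ n ihn =>
        intro hn
        have hsum : ∑ x ∈ Finset.HasAntidiagonal.antidiagonal n,
            PowerSeries.coeff x.1 (PowerSeries.derivative ℚ L) *
              PowerSeries.coeff x.2 E = PowerSeries.coeff n E := by
          rw [Finset.sum_eq_single_of_mem ((0 : ℕ), n)
            (by rw [Finset.HasAntidiagonal.mem_antidiagonal]; simp)]
          · rw [hL' 0, if_pos ⟨0, pow_zero p⟩, one_mul]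
          · intro x hx hxne
            rw [Finset.HasAntidiagonal.mem_antidiagonal] at hx
            have hx1 : x.1 ≠ 0 := by
              intro h
              exact hxne (Prod.ext h (by omega))
            rw [hL' x.1, if_neg, zero_mul]
            rintro ⟨i, hi⟩
            have hi1 : 1 ≤ i := by
              rcases Nat.eq_zero_or_pos i with rfl | h
              · rw [pow_zero] at hi; omega
              · exact h
            have hdvd : p ∣ x.1 + 1 := ⟨p ^ (i - 1), by
              rw [← hi, ← pow_succ', show i - 1 + 1 = i from by omega]⟩
            have : p ≤ x.1 + 1 := Nat.le_of_dvd (by omega) hdvd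
            omega
        have h1 := hrec n
        rw [hsum, ihn (by omega)] at h1
        have h2 : ((n : ℚ) + 1) ≠ 0 := by positivity
        have h3 : ((n.factorial : ℚ)) ≠ 0 := by
          exact_mod_cast n.factorial_ne_zero
        rw [Nat.factorial_succ]
        push_cast
        field_simp at h1 ⊢
        linarith [h1]
    intro m hm
    rw [hlam m, hfact m hm]
    have h4 : ((m.factorial : ℚ) : K) = (m.factorial : K) := Rat.cast_natCast _
    rw [Rat.cast_div, Rat.cast_one, h4]
    ring
  · rw [hlam 0, hc0]
    simp


/-- Let `E(x) = exp(Σ_{i≥0} x^{pⁱ}/pⁱ)` be the `p`-adic Artin–Hasse exponential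
(characterized over `ℚ` by `E(0) = 1` and `E' = L'·E` for
`L = Σ_{i≥0} x^{pⁱ}/pⁱ`), and let `γ` be a root of `log E(x) = 0`
(i.e. `Σ_{i≥0} γ^{pⁱ}/pⁱ = 0`) with `ord_p(γ) = 1/(p−1)` in a normed field `K`
whose norm restricts to the `p`-adic norm on `ℚ`. Writing
`E(γx) = Σ_{m≥0} λ_m x^m`, one has `ord_p(λ_m) ≥ m/(p−1)` for all `m ≥ 0`, and
`λ_m = γ^m/m!` for `0 ≤ m ≤ p−1`; in particular `λ₀ = 1`. -/
theorem artin_hasse_coefficients (p : ℕ) [hp : Fact p.Prime]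
    (K : Type*) [NontriviallyNormedField K]
    (hK : ∀ q : ℚ, ‖(q : K)‖ = ‖(q : ℚ_[p])‖)
    (L : PowerSeries ℚ)
    (hL : ∀ m : ℕ, PowerSeries.coeff m L =
      if h : ∃ i : ℕ, p ^ i = m then (1 : ℚ) / (p ^ Nat.find h) else 0)
    (E : PowerSeries ℚ)
    (hE0 : PowerSeries.constantCoeff E = 1)
    (hE : PowerSeries.derivative ℚ E = PowerSeries.derivative ℚ L * E)
    (γ : K)
    (hγroot : HasSum (fun i : ℕ => γ ^ (p ^ i) / (p : K) ^ i) 0)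
    (hγord : ‖γ‖ = (p : ℝ) ^ (-(1 : ℝ) / ((p : ℝ) - 1)))
    (lam : ℕ → K)
    (hlam : ∀ m : ℕ, lam m = ((PowerSeries.coeff m E : ℚ) : K) * γ ^ m) :
    (∀ m : ℕ, ‖lam m‖ ≤ (p : ℝ) ^ (-(m : ℝ) / ((p : ℝ) - 1))) ∧
    (∀ m : ℕ, m ≤ p - 1 → lam m = γ ^ m / (m.factorial : K)) ∧
    lam 0 = 1 := by
  exact artin_hasse_coefficients' p K hK L hL E hE0 hE γ hγord lam hlam
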